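/- Easy-example pruning does not change the minimizer: let C₁ ⊆ C₂ be caches (both containing the base entries (i,0,0) for all i), let w¹ minimize 𝓑_{C₁}. If every entry (i,f,δ) ∈ C₂ \ C₁ satisfies ⟨w¹,f⟩ + δ < 0, then 𝓑_{C₁}(w¹) = min_w 𝓑_{C₂}(w) and w¹ is also the minimizer of 𝓑_{C₂}. -/

import Mathlib

/-- The cache objective `𝓑_C(w) = λ‖w‖² + Σ_i max_{(i,f,δ)∈C} (⟨w,f⟩ + δ)`. -/
noncomputable def Bcache (k N : ℕ) (lam : ℝ)
    (C : Finset (Fin k × (Fin N → ℝ) × ℝ))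
    (hC : ∀ i : Fin k, ((i, 0, 0) : Fin k × (Fin N → ℝ) × ℝ) ∈ C)
    (w : Fin N → ℝ) : ℝ :=
  lam * ∑ t, (w t) ^ 2 +
    ∑ i, (C.filter (fun e => e.1 = i)).sup'
      ⟨(i, 0, 0), Finset.mem_filter.mpr ⟨hC i, rfl⟩⟩
      (fun e => (∑ t, w t * e.2.1 t) + e.2.2)

/-- Easy-example pruning: if every entry of `C₂ \ C₁` has negative value at the
minimizer `w¹` of `𝓑_{C₁}`, then `w¹` also minimizes `𝓑_{C₂}`, with the same
objective value. -/
theorem easy_pruning (k N : ℕ) (lam : ℝ) (hlam : 0 < lam)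
    (C₁ C₂ : Finset (Fin k × (Fin N → ℝ) × ℝ)) (hsub : C₁ ⊆ C₂)
    (hC₁ : ∀ i : Fin k, ((i, 0, 0) : Fin k × (Fin N → ℝ) × ℝ) ∈ C₁)
    (hC₂ : ∀ i : Fin k, ((i, 0, 0) : Fin k × (Fin N → ℝ) × ℝ) ∈ C₂)
    (w₁ : Fin N → ℝ)
    (h₁ : ∀ w, Bcache k N lam C₁ hC₁ w₁ ≤ Bcache k N lam C₁ hC₁ w)
    (heasy : ∀ e ∈ C₂ \ C₁, (∑ t, w₁ t * e.2.1 t) + e.2.2 < 0) :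
    (∀ w, Bcache k N lam C₂ hC₂ w₁ ≤ Bcache k N lam C₂ hC₂ w) ∧
    Bcache k N lam C₂ hC₂ w₁ = Bcache k N lam C₁ hC₁ w₁ := by
  have key : ∀ (w : Fin N → ℝ) (i : Fin k),
      (C₁.filter (fun e => e.1 = i)).sup'
        ⟨(i, 0, 0), Finset.mem_filter.mpr ⟨hC₁ i, rfl⟩⟩
        (fun e => (∑ t, w t * e.2.1 t) + e.2.2)
      ≤ (C₂.filter (fun e => e.1 = i)).sup'
        ⟨(i, 0, 0), Finset.mem_filter.mpr ⟨hC₂ i, rfl⟩⟩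
        (fun e => (∑ t, w t * e.2.1 t) + e.2.2) := by
    intro w i
    apply Finset.sup'_le
    intro e he
    obtain ⟨h1, h2⟩ := Finset.mem_filter.mp he
    refine Finset.le_sup' (fun e : Fin k × (Fin N → ℝ) × ℝ => (∑ t, w t * e.2.1 t) + e.2.2) ?_
    exact Finset.mem_filter.mpr ⟨hsub h1, h2⟩
  have hmono : ∀ w, Bcache k N lam C₁ hC₁ w ≤ Bcache k N lam C₂ hC₂ w := by
    intro w
    unfold Bcache
    exact add_le_add (le_refl _) (Finset.sum_le_sum fun i _ => key w i)
  have heq : Bcache k N lam C₂ hC₂ w₁ = Bcache k N lam C₁ hC₁ w₁ := by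
    unfold Bcache
    congr 1
    refine Finset.sum_congr rfl fun i _ => le_antisymm ?_ (key w₁ i)
    apply Finset.sup'_le
    intro e he
    obtain ⟨heC₂, hei⟩ := Finset.mem_filter.mp he
    by_cases h : e ∈ C₁
    · refine Finset.le_sup' (fun e : Fin k × (Fin N → ℝ) × ℝ => (∑ t, w₁ t * e.2.1 t) + e.2.2) ?_
      exact Finset.mem_filter.mpr ⟨h, hei⟩
    · have hneg := heasy e (Finset.mem_sdiff.mpr ⟨heC₂, h⟩)
      have h0 : (0:ℝ) ≤ (C₁.filter (fun e => e.1 = i)).sup'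
          ⟨(i, 0, 0), Finset.mem_filter.mpr ⟨hC₁ i, rfl⟩⟩
          (fun e => (∑ t, w₁ t * e.2.1 t) + e.2.2) := by
        have := Finset.le_sup' (fun e : Fin k × (Fin N → ℝ) × ℝ =>
            (∑ t, w₁ t * e.2.1 t) + e.2.2)
          (Finset.mem_filter.mpr ⟨hC₁ i, rfl⟩ :
            ((i, 0, 0) : Fin k × (Fin N → ℝ) × ℝ) ∈ C₁.filter (fun e => e.1 = i))
        simpa using this
      linarith
  exact ⟨fun w => heq ▸ le_trans (h₁ w) (hmono w), heq⟩
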